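/- Let y ∈ ℝⁿ, X ∈ ℝ^{n×p}, k ∈ {0,1,…,p} and τ > λ > 0, and let U_k^λ = {Δ ∈ ℝ^{n×p} : Δ has at most k nonzero columns and ‖Δᵢ‖₂ ≤ λ for all i}. Then the problem min over β of (min over Δ ∈ U_k^λ of ‖y − (X + Δ)β‖₂) + τ‖β‖₁ has the same optimal value and the same set of optimal solutions as the constrained problem: minimize ‖y − Xβ‖₂ + (τ − λ)‖β‖₁ + λ T_k(β) over β ∈ ℝ^p subject to λ Σ_{i=1}^k |β_(i)| ≤ ‖y − Xβ‖₂. -/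

import Mathlib

open Finset

/-- Absolute values of the entries of `β`, sorted in increasing order. -/
noncomputable def sortAbs {p : ℕ} (β : Fin p → ℝ) : Fin p → ℝ :=
  fun i => |β (Tuple.sort (fun j => |β j|) i)|

/-- `∑_{i=1}^k |β_(i)|`: the sum of the `k` largest absolute values of entries of `β`. -/
noncomputable def topSum {p : ℕ} (k : ℕ) (β : Fin p → ℝ) : ℝ :=
  ∑ i ∈ Finset.univ.filter (fun i : Fin p => p - k ≤ (i : ℕ)), sortAbs β i

/-- The trimmed Lasso penalty `T_k(β)`: sum of the `p - k` smallest `|β_i|`. -/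
noncomputable def trimmedLasso {p : ℕ} (k : ℕ) (β : Fin p → ℝ) : ℝ :=
  ∑ i ∈ Finset.univ.filter (fun i : Fin p => (i : ℕ) < p - k), sortAbs β i

/-- `‖β‖₁`: the ℓ₁ norm. -/
noncomputable def l1 {p : ℕ} (β : Fin p → ℝ) : ℝ := ∑ i, |β i|

/-- The Euclidean norm of a vector. -/
noncomputable def norm2 {m : ℕ} (v : Fin m → ℝ) : ℝ := Real.sqrt (∑ i, v i ^ 2)

/-- The uncertainty set `U_k^λ`: matrices with at most `k` nonzero columns, each
column of Euclidean norm at most `λ`. -/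
noncomputable def kColBound {n p : ℕ} (k : ℕ) (lam : ℝ) : Set (Matrix (Fin n) (Fin p) ℝ) :=
  {Δ | (Finset.univ.filter (fun i : Fin p => ∃ j, Δ j i ≠ 0)).card ≤ k ∧
    ∀ i : Fin p, norm2 (fun j => Δ j i) ≤ lam}

/-- The min-min robust objective with `r = τ‖·‖₁`:
`β ↦ (min_{Δ ∈ U_k^λ} ‖y - (X+Δ)β‖₂) + τ‖β‖₁`. -/
noncomputable def minminObj {n p : ℕ} (y : Fin n → ℝ) (X : Matrix (Fin n) (Fin p) ℝ)
    (k : ℕ) (lam τ : ℝ) (β : Fin p → ℝ) : ℝ :=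
  sInf {v : ℝ | ∃ Δ ∈ kColBound (n := n) (p := p) k lam,
    v = norm2 (y - (X + Δ).mulVec β)} + τ * l1 β

section AuxLemmas

lemma norm2_eq_norm {m : ℕ} (v : Fin m → ℝ) :
    norm2 v = ‖(WithLp.equiv 2 (Fin m → ℝ)).symm v‖ := by
  rw [EuclideanSpace.norm_eq]
  simp [norm2, Real.norm_eq_abs, sq_abs]

lemma norm2_nonneg {m : ℕ} (v : Fin m → ℝ) : 0 ≤ norm2 v := Real.sqrt_nonneg _

lemma norm2_smul {m : ℕ} (c : ℝ) (v : Fin m → ℝ) : norm2 (c • v) = |c| * norm2 v := by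
  rw [norm2_eq_norm, norm2_eq_norm, show (WithLp.equiv 2 (Fin m → ℝ)).symm (c • v) = c • (WithLp.equiv 2 (Fin m → ℝ)).symm v from rfl, norm_smul, Real.norm_eq_abs]

lemma norm2_sum_le {m : ℕ} {ι : Type*} (s : Finset ι) (f : ι → Fin m → ℝ) :
    norm2 (∑ i ∈ s, f i) ≤ ∑ i ∈ s, norm2 (f i) := by
  simp only [norm2_eq_norm]
  rw [show (WithLp.equiv 2 (Fin m → ℝ)).symm (∑ i ∈ s, f i)
      = ∑ i ∈ s, (WithLp.equiv 2 (Fin m → ℝ)).symm (f i) from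
    map_sum (WithLp.linearEquiv 2 ℝ (Fin m → ℝ)).symm f s]
  exact norm_sum_le _ _

lemma norm2_sub_norm2_le {m : ℕ} (a b : Fin m → ℝ) : norm2 a - norm2 b ≤ norm2 (a - b) := by
  simp only [norm2_eq_norm]
  rw [show (WithLp.equiv 2 (Fin m → ℝ)).symm (a - b) = (WithLp.equiv 2 (Fin m → ℝ)).symm a - (WithLp.equiv 2 (Fin m → ℝ)).symm b from rfl]
  exact norm_sub_norm_le _ _

lemma sortAbs_nonneg {p : ℕ} (β : Fin p → ℝ) (i : Fin p) : 0 ≤ sortAbs β i := abs_nonneg _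

lemma topSum_nonneg {p : ℕ} (k : ℕ) (β : Fin p → ℝ) : 0 ≤ topSum k β :=
  Finset.sum_nonneg fun i _ => sortAbs_nonneg β i

lemma trimmedLasso_nonneg {p : ℕ} (k : ℕ) (β : Fin p → ℝ) : 0 ≤ trimmedLasso k β :=
  Finset.sum_nonneg fun i _ => sortAbs_nonneg β i

lemma l1_eq_top_add_trim {p : ℕ} (k : ℕ) (β : Fin p → ℝ) :
    l1 β = topSum k β + trimmedLasso k β := by
  have h1 : l1 β = ∑ i, sortAbs β i :=
    (Equiv.sum_comp (Tuple.sort fun j => |β j|) (fun i => |β i|)).symm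
  rw [h1, topSum, trimmedLasso, add_comm,
    ← Finset.sum_filter_add_sum_filter_not Finset.univ (fun i : Fin p => (i : ℕ) < p - k)]
  congr 2
  ext i
  simp [not_lt]

lemma topSum_le_l1 {p : ℕ} (k : ℕ) (β : Fin p → ℝ) : topSum k β ≤ l1 β := by
  rw [l1_eq_top_add_trim k β]
  linarith [trimmedLasso_nonneg k β]

lemma l1_nonneg {p : ℕ} (β : Fin p → ℝ) : 0 ≤ l1 β :=
  Finset.sum_nonneg fun i _ => abs_nonneg _

lemma sortAbs_smul {p : ℕ} {α : ℝ} (hα : 0 ≤ α) (β : Fin p → ℝ) :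
    sortAbs (α • β) = fun i => α * sortAbs β i := by
  set g : Fin p → ℝ := fun j => |β j| with hg
  set g' : Fin p → ℝ := fun j => |(α • β) j| with hg'
  have hg'eq : g' = fun j => α * g j := by
    funext j; simp [hg', hg, abs_mul, abs_of_nonneg hα]
  have h1 : Monotone (g' ∘ Tuple.sort g) := by
    rw [hg'eq]
    exact fun a b hab => mul_le_mul_of_nonneg_left (Tuple.monotone_sort g hab) hα
  have h2 : g' ∘ Tuple.sort g = g' ∘ Tuple.sort g' :=
    Tuple.unique_monotone h1 (Tuple.monotone_sort g')
  funext i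
  have := congrFun h2.symm i
  simp only [Function.comp_apply] at this
  calc sortAbs (α • β) i = g' (Tuple.sort g' i) := rfl
    _ = g' (Tuple.sort g i) := this
    _ = α * sortAbs β i := by rw [hg'eq]; rfl

lemma topSum_smul {p : ℕ} (k : ℕ) {α : ℝ} (hα : 0 ≤ α) (β : Fin p → ℝ) :
    topSum k (α • β) = α * topSum k β := by
  simp [topSum, sortAbs_smul hα, Finset.mul_sum]

lemma l1_smul {p : ℕ} {α : ℝ} (hα : 0 ≤ α) (β : Fin p → ℝ) :
    l1 (α • β) = α * l1 β := by
  simp [l1, abs_mul, abs_of_nonneg hα, Finset.mul_sum]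

lemma fin_strictMono_le_apply {k p : ℕ} {f : Fin k → Fin p} (hf : StrictMono f) :
    ∀ i : Fin k, (i : ℕ) ≤ (f i : ℕ) := by
  intro i
  induction' hm : (i : ℕ) with m ih generalizing i
  · exact Nat.zero_le _
  · have hm' : m < k := by omega
    have hlt : (⟨m, hm'⟩ : Fin k) < i := by simp [Fin.lt_def, hm]
    have := ih ⟨m, hm'⟩ rfl
    have h2 := hf hlt
    rw [Fin.lt_def] at h2
    omega

lemma fin_strictMono_apply_le {k p : ℕ} {f : Fin k → Fin p} (hf : StrictMono f)
    (i : Fin k) : (f i : ℕ) ≤ p - k + (i : ℕ) := by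
  have hrev : StrictMono (fun j : Fin k => (f j.rev).rev) := by
    intro a b hab
    exact Fin.rev_lt_rev.mpr (hf (Fin.rev_lt_rev.mpr hab))
  have h := fin_strictMono_le_apply hrev i.rev
  simp only [Fin.rev_rev, Fin.val_rev] at h
  have h1 := (f i).isLt
  have h2 := i.isLt
  omega

lemma topFilter_eq {p k : ℕ} (hk : k ≤ p) :
    (Finset.univ.filter (fun i : Fin p => p - k ≤ (i : ℕ))) =
      Finset.map ⟨fun i : Fin k => (⟨p - k + (i : ℕ), by omega⟩ : Fin p),
        fun a b hab => by
          have := Fin.mk.injEq (p - k + (a : ℕ)) _ (p - k + (b : ℕ)) _ ▸ hab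
          exact Fin.ext (by omega)⟩ Finset.univ := by
  ext i
  simp only [Finset.mem_filter, Finset.mem_univ, true_and, Finset.mem_map,
    Function.Embedding.coeFn_mk]
  constructor
  · intro hi
    exact ⟨⟨(i : ℕ) - (p - k), by omega⟩, Fin.ext (by show p - k + ((i : ℕ) - (p - k)) = (i : ℕ); omega)⟩
  · rintro ⟨a, ha⟩
    rw [← ha]
    show p - k ≤ p - k + (a : ℕ); omega

-- topSum as a sum over Fin k
lemma topSum_eq_fink {p k : ℕ} (hk : k ≤ p) (β : Fin p → ℝ) :
    topSum k β = ∑ i : Fin k, sortAbs β ⟨p - k + (i : ℕ), by omega⟩ := by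
  rw [topSum, topFilter_eq hk, Finset.sum_map]
  rfl

lemma exists_topSet {p k : ℕ} (hk : k ≤ p) (β : Fin p → ℝ) :
    ∃ I : Finset (Fin p), I.card = k ∧ ∑ j ∈ I, |β j| = topSum k β := by
  set σ := Tuple.sort (fun j : Fin p => |β j|) with hσ
  refine ⟨(Finset.univ.filter (fun i : Fin p => p - k ≤ (i : ℕ))).image σ, ?_, ?_⟩
  · rw [Finset.card_image_of_injective _ σ.injective, topFilter_eq hk, Finset.card_map,
      Finset.card_univ, Fintype.card_fin]
  · rw [Finset.sum_image (fun a _ b _ hab => σ.injective hab)]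
    rfl

lemma sum_le_topSum {p k : ℕ} (hk : k ≤ p) (β : Fin p → ℝ) (J : Finset (Fin p))
    (hJ : J.card ≤ k) : ∑ j ∈ J, |β j| ≤ topSum k β := by
  obtain ⟨J', hJJ', _, hJ'card⟩ := Finset.exists_subsuperset_card_eq (J.subset_univ) hJ
    (by simpa using hk)
  have step1 : ∑ j ∈ J, |β j| ≤ ∑ j ∈ J', |β j| :=
    Finset.sum_le_sum_of_subset_of_nonneg hJJ' (fun i _ _ => abs_nonneg _)
  refine step1.trans ?_
  set σ := Tuple.sort (fun j : Fin p => |β j|) with hσ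
  set A : Finset (Fin p) := J'.image σ.symm with hA
  have hAcard : A.card = k := by
    rw [hA, Finset.card_image_of_injective _ σ.symm.injective, hJ'card]
  have hsum : ∑ j ∈ J', |β j| = ∑ a ∈ A, sortAbs β a := by
    rw [hA, Finset.sum_image (fun a _ b _ hab => σ.symm.injective hab)]
    apply Finset.sum_congr rfl
    intro x _
    simp [sortAbs, hσ]
  rw [hsum, topSum_eq_fink hk β]
  -- sum over A via orderIsoOfFin
  have hmono : Monotone (sortAbs β) := Tuple.monotone_sort (fun j : Fin p => |β j|)
  have e := A.orderIsoOfFin hAcard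
  have hAs : ∑ a ∈ A, sortAbs β a = ∑ i : Fin k, sortAbs β (A.orderIsoOfFin hAcard i) := by
    rw [← Finset.sum_coe_sort A (sortAbs β)]
    exact (Equiv.sum_comp (A.orderIsoOfFin hAcard).toEquiv
      (fun x : A => sortAbs β (x : Fin p))).symm
  rw [hAs]
  apply Finset.sum_le_sum
  intro i _
  apply hmono
  have hsm : StrictMono (fun i : Fin k => ((A.orderIsoOfFin hAcard i : Fin p))) :=
    fun a b hab => (A.orderIsoOfFin hAcard).strictMono hab
  have := fin_strictMono_apply_le hsm i
  rw [Fin.le_def]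
  simpa using this

lemma mulVec_eq_sum_cols {n p : ℕ} (Δ : Matrix (Fin n) (Fin p) ℝ) (β : Fin p → ℝ) :
    Δ.mulVec β = ∑ i, β i • (fun j => Δ j i) := by
  funext j
  simp [Matrix.mulVec, dotProduct, Finset.sum_apply, mul_comm]

-- lower bound
lemma inner_lower {n p : ℕ} (y : Fin n → ℝ) (X : Matrix (Fin n) (Fin p) ℝ) (k : ℕ)
    (hk : k ≤ p) {lam : ℝ} (hlam : 0 ≤ lam) (β : Fin p → ℝ)
    (Δ : Matrix (Fin n) (Fin p) ℝ) (hΔ : Δ ∈ kColBound k lam) :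
    max (norm2 (y - X.mulVec β) - lam * topSum k β) 0 ≤ norm2 (y - (X + Δ).mulVec β) := by
  obtain ⟨hcard, hcols⟩ := hΔ
  rw [max_le_iff]
  refine ⟨?_, norm2_nonneg _⟩
  have key : norm2 (Δ.mulVec β) ≤ lam * topSum k β := by
    set s := Finset.univ.filter (fun i : Fin p => ∃ j, Δ j i ≠ 0) with hs
    have hsum : Δ.mulVec β = ∑ i ∈ s, β i • (fun j => Δ j i) := by
      rw [mulVec_eq_sum_cols]
      symm
      apply Finset.sum_subset (Finset.subset_univ s)
      intro i _ hi
      have : ∀ j, Δ j i = 0 := by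
        intro j
        by_contra hj
        exact hi (Finset.mem_filter.mpr ⟨Finset.mem_univ i, ⟨j, hj⟩⟩)
      funext j
      simp [this j]
    rw [hsum]
    calc norm2 (∑ i ∈ s, β i • (fun j => Δ j i)) ≤ ∑ i ∈ s, norm2 (β i • (fun j => Δ j i)) :=
          norm2_sum_le _ _
      _ = ∑ i ∈ s, |β i| * norm2 (fun j => Δ j i) := by
          apply Finset.sum_congr rfl; intro i _; exact norm2_smul _ _
      _ ≤ ∑ i ∈ s, |β i| * lam := by
          apply Finset.sum_le_sum; intro i _
          exact mul_le_mul_of_nonneg_left (hcols i) (abs_nonneg _)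
      _ = lam * ∑ i ∈ s, |β i| := by rw [Finset.mul_sum]; apply Finset.sum_congr rfl; intros; ring
      _ ≤ lam * topSum k β :=
          mul_le_mul_of_nonneg_left (sum_le_topSum hk β s hcard) hlam
  have h2 : norm2 (y - X.mulVec β) - norm2 (Δ.mulVec β) ≤ norm2 (y - (X + Δ).mulVec β) := by
    have : y - X.mulVec β - Δ.mulVec β = y - (X + Δ).mulVec β := by
      rw [Matrix.add_mulVec]; abel
    rw [← this]
    exact norm2_sub_norm2_le _ _
  linarith

-- attainment
lemma inner_attained {n p : ℕ} (y : Fin n → ℝ) (X : Matrix (Fin n) (Fin p) ℝ) (k : ℕ)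
    (hk : k ≤ p) {lam : ℝ} (hlam : 0 ≤ lam) (β : Fin p → ℝ) :
    ∃ Δ ∈ kColBound (n := n) (p := p) k lam,
      norm2 (y - (X + Δ).mulVec β) = max (norm2 (y - X.mulVec β) - lam * topSum k β) 0 := by
  set f := norm2 (y - X.mulVec β) with hf
  set S := topSum k β with hS
  have hf0 : 0 ≤ f := norm2_nonneg _
  have hS0 : 0 ≤ S := topSum_nonneg k β
  by_cases hdeg : f = 0 ∨ S = 0
  · refine ⟨0, ⟨by simp, fun i => by simpa [norm2] using hlam⟩, ?_⟩
    rcases hdeg with h | h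
    · rw [add_zero, h]
      have : lam * S ≥ 0 := mul_nonneg hlam hS0
      rw [max_eq_right (by linarith)]
      exact h ▸ hf ▸ rfl
    · rw [add_zero, h, mul_zero, sub_zero, max_eq_left hf0]
  · push_neg at hdeg
    obtain ⟨hfpos, hSpos⟩ : 0 < f ∧ 0 < S :=
      ⟨lt_of_le_of_ne hf0 (Ne.symm hdeg.1), lt_of_le_of_ne hS0 (Ne.symm hdeg.2)⟩
    obtain ⟨I, hIcard, hIsum⟩ := exists_topSet hk β
    set c := min f (lam * S) with hc
    have hc0 : 0 ≤ c := le_min hf0 (mul_nonneg hlam hS0)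
    have hcf : c ≤ f := min_le_left _ _
    have hclamS : c ≤ lam * S := min_le_right _ _
    set r := y - X.mulVec β with hr
    set Δ : Matrix (Fin n) (Fin p) ℝ :=
      fun j i => if i ∈ I then (SignType.sign (β i) : ℝ) * ((c / S) * (f⁻¹ * r j)) else 0 with hΔ
    have hcol : ∀ i : Fin p, (fun j => Δ j i) = if i ∈ I
        then ((SignType.sign (β i) : ℝ) * (c / S) * f⁻¹) • r else 0 := by
      intro i
      funext j
      by_cases hi : i ∈ I <;> simp [hΔ, hi, Pi.smul_apply, smul_eq_mul] <;> ring
    have hnormr : norm2 r = f := rfl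
    refine ⟨Δ, ⟨?_, ?_⟩, ?_⟩
    · -- card
      apply le_trans (Finset.card_le_card ?_) (le_of_eq hIcard)
      intro i hi
      simp only [Finset.mem_filter, Finset.mem_univ, true_and] at hi
      obtain ⟨j, hj⟩ := hi
      by_contra hiI
      exact hj (by simp [hΔ, hiI])
    · -- column norms
      intro i
      rw [show (fun j => Δ j i) = _ from hcol i]
      by_cases hi : i ∈ I
      · rw [if_pos hi, norm2_smul, hnormr]
        have habs : |(SignType.sign (β i) : ℝ) * (c / S) * f⁻¹| ≤ (c / S) * f⁻¹ := by
          rw [abs_mul, abs_mul]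
          have h1 : |(SignType.sign (β i) : ℝ)| ≤ 1 := by
            rcases lt_trichotomy (β i) 0 with h | h | h <;> simp [h]
          have h2 : |c / S| = c / S := abs_of_nonneg (div_nonneg hc0 hS0)
          have h3 : |f⁻¹| = f⁻¹ := abs_of_nonneg (inv_nonneg.mpr hf0)
          rw [h2, h3]
          have h4 : 0 ≤ c / S := div_nonneg hc0 hS0
          have h5 : 0 ≤ f⁻¹ := inv_nonneg.mpr hf0
          have h6 : |(SignType.sign (β i) : ℝ)| * (c / S) ≤ 1 * (c / S) :=
            mul_le_mul_of_nonneg_right h1 h4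
          nlinarith
        calc |(SignType.sign (β i) : ℝ) * (c / S) * f⁻¹| * f ≤ ((c / S) * f⁻¹) * f :=
              mul_le_mul_of_nonneg_right habs hf0
          _ = c / S := by field_simp
          _ ≤ lam := by rw [div_le_iff₀ hSpos]; linarith
      · rw [if_neg hi]
        simpa [norm2] using hlam
    · -- value
      have hΔβ : Δ.mulVec β = (c * f⁻¹) • r := by
        funext j
        simp only [Matrix.mulVec, dotProduct]
        have hterm : ∀ i : Fin p, Δ j i * β i =
            if i ∈ I then (c / S) * (f⁻¹ * r j) * |β i| else 0 := by
          intro i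
          by_cases hi : i ∈ I
          · simp only [hΔ, if_pos hi]
            rw [show (SignType.sign (β i) : ℝ) * ((c / S) * (f⁻¹ * r j)) * β i
              = ((SignType.sign (β i) : ℝ) * β i) * ((c / S) * (f⁻¹ * r j)) by ring,
              sign_mul_self]
            ring
          · simp [hΔ, hi]
        rw [Finset.sum_congr rfl (fun i _ => hterm i), Finset.sum_ite_mem,
          Finset.univ_inter, ← Finset.mul_sum, hIsum, ← hS]
        have : (S : ℝ) ≠ 0 := ne_of_gt hSpos
        have hfne : f ≠ 0 := ne_of_gt hfpos
        simp only [Pi.smul_apply, smul_eq_mul]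
        field_simp
      have hfinal : y - (X + Δ).mulVec β = (1 - c * f⁻¹) • r := by
        rw [Matrix.add_mulVec, hΔβ]
        funext j
        simp only [hr, Pi.sub_apply, Pi.add_apply, Pi.smul_apply, smul_eq_mul]
        ring
      rw [hfinal, norm2_smul, hnormr]
      have h1 : c * f⁻¹ ≤ 1 := by
        rw [← div_eq_mul_inv, div_le_one hfpos]
        exact hcf
      have h2 : |1 - c * f⁻¹| = 1 - c * f⁻¹ := abs_of_nonneg (by linarith)
      rw [h2]
      have h3 : (1 - c * f⁻¹) * f = f - c := by field_simp
      rw [h3, hc]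
      rcases le_total f (lam * S) with h | h
      · rw [min_eq_left h, sub_self, max_eq_right (by linarith)]
      · rw [min_eq_right h, max_eq_left (by linarith)]

lemma minminObj_eq {n p : ℕ} (y : Fin n → ℝ) (X : Matrix (Fin n) (Fin p) ℝ) (k : ℕ)
    (hk : k ≤ p) {lam τ : ℝ} (hlam : 0 ≤ lam) (β : Fin p → ℝ) :
    minminObj y X k lam τ β =
      max (norm2 (y - X.mulVec β) - lam * topSum k β) 0 + τ * l1 β := by
  rw [minminObj]
  congr 1
  apply IsLeast.csInf_eq
  constructor
  · obtain ⟨Δ, hΔ, hval⟩ := inner_attained y X k hk hlam β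
    exact ⟨Δ, hΔ, hval.symm⟩
  · rintro v ⟨Δ, hΔ, rfl⟩
    exact inner_lower y X k hk hlam β Δ hΔ

-- continuity/IVT based scaling lemma
lemma exists_better {n p : ℕ} (y : Fin n → ℝ) (X : Matrix (Fin n) (Fin p) ℝ) (k : ℕ)
    (hk : k ≤ p) {lam τ : ℝ} (hlam : 0 < lam) (hτ : lam < τ) (β : Fin p → ℝ)
    (hvio : norm2 (y - X.mulVec β) < lam * topSum k β) :
    ∃ β' : Fin p → ℝ, lam * topSum k β' = norm2 (y - X.mulVec β') ∧
      minminObj y X k lam τ β' < minminObj y X k lam τ β := by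
  set v := X.mulVec β with hv
  set S := topSum k β with hS
  have hf0 : 0 ≤ norm2 (y - v) := norm2_nonneg _
  have hSpos : 0 < S := by
    by_contra h
    push_neg at h
    have : S = 0 := le_antisymm h (topSum_nonneg k β)
    rw [this, mul_zero] at hvio
    linarith
  have hl1pos : 0 < l1 β := lt_of_lt_of_le hSpos (topSum_le_l1 k β)
  set F : ℝ → ℝ := fun α => norm2 (y - α • v) - lam * α * S with hF
  have hFcont : Continuous F := by
    have h1 : Continuous fun α : ℝ => ∑ i, (y i - α * v i) ^ 2 := by
      apply continuous_finset_sum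
      intro i _
      exact ((continuous_const.sub (continuous_id.mul continuous_const)).pow 2)
    have h2 : Continuous fun α : ℝ => norm2 (y - α • v) := by
      have : (fun α : ℝ => norm2 (y - α • v)) =
          fun α : ℝ => Real.sqrt (∑ i, (y i - α * v i) ^ 2) := by
        funext α
        rw [norm2]
        congr 1
      rw [this]
      exact h1.sqrt
    exact h2.sub ((continuous_const.mul continuous_id).mul continuous_const)
  have hF1 : F 1 < 0 := by
    simp only [hF, one_smul, mul_one]
    linarith
  have hF0 : 0 ≤ F 0 := by
    simp only [hF, zero_smul, mul_zero, zero_mul, sub_zero, sub_zero]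
    exact norm2_nonneg _
  have hIVT : (0 : ℝ) ∈ F '' Set.Icc 0 1 := by
    apply intermediate_value_Icc' (by norm_num : (0:ℝ) ≤ 1) hFcont.continuousOn
    exact ⟨le_of_lt hF1, hF0⟩
  obtain ⟨α, hαmem, hFα⟩ := hIVT
  obtain ⟨hα0, hα1⟩ := hαmem
  have hαne1 : α ≠ 1 := by
    rintro rfl
    linarith
  have hαlt1 : α < 1 := lt_of_le_of_ne hα1 hαne1
  refine ⟨α • β, ?_, ?_⟩
  · have hXαβ : X.mulVec (α • β) = α • v := by rw [hv, Matrix.mulVec_smul]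
    rw [topSum_smul k hα0, hXαβ]
    rw [hF] at hFα
    simp only at hFα
    rw [← hS]
    linarith
  · have hXαβ : X.mulVec (α • β) = α • v := by rw [hv, Matrix.mulVec_smul]
    rw [minminObj_eq y X k hk hlam.le, minminObj_eq y X k hk hlam.le, hXαβ,
      topSum_smul k hα0, l1_smul hα0]
    have heq : norm2 (y - α • v) - lam * (α * S) = 0 := by
      rw [hF] at hFα; simp only at hFα; linarith
    rw [← hS, heq]
    have hneg : norm2 (y - v) - lam * S < 0 := by linarith
    rw [max_eq_right (le_refl (0:ℝ)), max_eq_right (le_of_lt hneg)]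
    have : τ * (α * l1 β) < τ * l1 β := by
      have hτ0 : 0 < τ := lt_trans hlam hτ
      nlinarith [mul_pos (mul_pos hτ0 hl1pos) (sub_pos.mpr hαlt1)]
    linarith

end AuxLemmas

/-- Corollary 3.1: for `τ > λ > 0`, the min-min robust problem
with penalty `τ‖β‖₁` has the same optimal value and the same set of optimal
solutions as the constrained trimmed Lasso problem
`min ‖y - Xβ‖₂ + (τ-λ)‖β‖₁ + λT_k(β)  s.t.  λ∑_{i=1}^k |β_(i)| ≤ ‖y - Xβ‖₂`. -/
theorem minmin_robust_as_constrained_trimmedLasso {n p : ℕ} (y : Fin n → ℝ)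
    (X : Matrix (Fin n) (Fin p) ℝ) (k : ℕ) (hk : k ≤ p)
    (τ lam : ℝ) (hlam : 0 < lam) (hτ : lam < τ) :
    sInf {v : ℝ | ∃ β : Fin p → ℝ, v = minminObj y X k lam τ β} =
      sInf {v : ℝ | ∃ β : Fin p → ℝ,
        lam * topSum k β ≤ norm2 (y - X.mulVec β) ∧
        v = norm2 (y - X.mulVec β) + (τ - lam) * l1 β + lam * trimmedLasso k β} ∧
    {β : Fin p → ℝ | ∀ β' : Fin p → ℝ,
        minminObj y X k lam τ β ≤ minminObj y X k lam τ β'} =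
      {β : Fin p → ℝ | lam * topSum k β ≤ norm2 (y - X.mulVec β) ∧
        ∀ β' : Fin p → ℝ, lam * topSum k β' ≤ norm2 (y - X.mulVec β') →
          norm2 (y - X.mulVec β) + (τ - lam) * l1 β + lam * trimmedLasso k β ≤
            norm2 (y - X.mulVec β') + (τ - lam) * l1 β' + lam * trimmedLasso k β'} := by
  classical
  set g : (Fin p → ℝ) → ℝ := fun β => minminObj y X k lam τ β with hg
  set h : (Fin p → ℝ) → ℝ := fun β =>
    norm2 (y - X.mulVec β) + (τ - lam) * l1 β + lam * trimmedLasso k β with hh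
  set C : (Fin p → ℝ) → Prop := fun β => lam * topSum k β ≤ norm2 (y - X.mulVec β) with hC
  have hgeq : ∀ β, g β = max (norm2 (y - X.mulVec β) - lam * topSum k β) 0 + τ * l1 β :=
    fun β => minminObj_eq y X k hk hlam.le β
  have hgh : ∀ β, C β → g β = h β := by
    intro β hCβ
    rw [hgeq β, hh, max_eq_left (by rw [hC] at hCβ; linarith)]
    have hsplit := l1_eq_top_add_trim k β
    simp only
    linear_combination lam * hsplit
  have hg0 : ∀ β, 0 ≤ g β := by
    intro β
    rw [hgeq β]
    have := l1_nonneg β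
    have h2 : (0:ℝ) ≤ max (norm2 (y - X.mulVec β) - lam * topSum k β) 0 := le_max_right _ _
    nlinarith
  have hbetter : ∀ β, ¬ C β → ∃ β', C β' ∧ g β' < g β := by
    intro β hCβ
    rw [hC] at hCβ
    obtain ⟨β', heq, hlt⟩ := exists_better y X k hk hlam hτ β (not_le.mp hCβ)
    exact ⟨β', by rw [hC]; exact le_of_eq heq, hlt⟩
  have hC0 : C 0 := by
    rw [hC]
    have : topSum k (0 : Fin p → ℝ) = 0 := by
      rw [show (0 : Fin p → ℝ) = (0:ℝ) • (0 : Fin p → ℝ) by simp, topSum_smul k le_rfl]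
      ring
    simp only [this, mul_zero]
    exact norm2_nonneg _
  set A : Set ℝ := {v : ℝ | ∃ β : Fin p → ℝ, v = minminObj y X k lam τ β} with hA
  set B : Set ℝ := {v : ℝ | ∃ β : Fin p → ℝ,
    lam * topSum k β ≤ norm2 (y - X.mulVec β) ∧
    v = norm2 (y - X.mulVec β) + (τ - lam) * l1 β + lam * trimmedLasso k β} with hB
  have hBA : B ⊆ A := by
    rintro b ⟨β, hcon, rfl⟩
    refine ⟨β, ?_⟩
    rw [show minminObj y X k lam τ β = g β from rfl, hgh β hcon]
  have hAne : A.Nonempty := ⟨minminObj y X k lam τ 0, 0, rfl⟩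
  have hBne : B.Nonempty := ⟨_, 0, hC0, rfl⟩
  have hAbdd : BddBelow A := ⟨0, by rintro a ⟨β, rfl⟩; exact hg0 β⟩
  have hBbdd : BddBelow B := by
    refine ⟨0, ?_⟩
    rintro b ⟨β, hcon, rfl⟩
    have h1 := norm2_nonneg (y - X.mulVec β)
    have h2 := l1_nonneg β
    have h3 := trimmedLasso_nonneg k β
    nlinarith
  constructor
  · apply le_antisymm
    · exact csInf_le_csInf hAbdd hBne hBA
    · apply le_csInf hAne
      rintro a ⟨β, rfl⟩
      by_cases hc : C β
      · have : h β ∈ B := ⟨β, hc, rfl⟩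
        have := csInf_le hBbdd this
        rw [← hgh β hc] at this
        exact this
      · obtain ⟨β', hc', hlt⟩ := hbetter β hc
        have hmem : h β' ∈ B := ⟨β', hc', rfl⟩
        have h1 := csInf_le hBbdd hmem
        rw [← hgh β' hc'] at h1
        exact le_trans h1 (le_of_lt hlt)
  · ext β
    simp only [Set.mem_setOf_eq]
    constructor
    · intro hopt
      have hcβ : C β := by
        by_contra hc
        obtain ⟨β', _, hlt⟩ := hbetter β hc
        exact absurd (hopt β') (not_le.mpr hlt)
      refine ⟨hcβ, ?_⟩
      intro β' hc'
      have := hopt β'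
      rw [show minminObj y X k lam τ β = g β from rfl,
        show minminObj y X k lam τ β' = g β' from rfl, hgh β hcβ, hgh β' hc'] at this
      exact this
    · rintro ⟨hcβ, hopt⟩
      intro β'
      show g β ≤ g β'
      by_cases hc' : C β'
      · rw [hgh β hcβ, hgh β' hc']
        exact hopt β' hc'
      · obtain ⟨β'', hc'', hlt⟩ := hbetter β' hc'
        have h1 : g β ≤ g β'' := by
          rw [hgh β hcβ, hgh β'' hc'']
          exact hopt β'' hc''
        exact le_trans h1 (le_of_lt hlt)
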